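/- A connected finite graph admitting a half-edge labeling from {U, D, L, R} satisfying the grid constraints, with at least one node lacking a D-label and at least one node lacking an L-label, is isomorphic to an h × w grid graph for some h, w, i.e., its nodes can be assigned coordinates (x,y) with 0 ≤ x < w, 0 ≤ y < h such that edges join exactly the pairs differing by 1 in exactly one coordinate. -/

import Mathlib

inductive GridLabel | U | D | L | R
deriving DecidableEq

/-- Node `u` has an incident half-edge labeled `a`. -/
def HasLab {V : Type*} (G : SimpleGraph V) (lab : V → V → GridLabel)
    (u : V) (a : GridLabel) : Prop :=
  ∃ v, G.Adj u v ∧ lab u v = a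

/-- Adjacency in an `w × h` grid: coordinates differ by `1` in exactly one coordinate. -/
def GridAdj {w h : ℕ} (p q : Fin w × Fin h) : Prop :=
  ((p.1 : ℕ) + 1 = q.1 ∧ p.2 = q.2) ∨ ((q.1 : ℕ) + 1 = p.1 ∧ p.2 = q.2) ∨
  ((p.2 : ℕ) + 1 = q.2 ∧ p.1 = q.1) ∨ ((q.2 : ℕ) + 1 = p.2 ∧ p.1 = q.1)

open GridLabel in
structure GridSetup (V : Type*) where
  G : SimpleGraph V
  lab : V → V → GridLabel
  ha : ∀ u v w, G.Adj u v → G.Adj u w → v ≠ w → lab u v ≠ lab u w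
  hb : ∀ u v, G.Adj u v → (lab u v = L ↔ lab v u = R)
  hc : ∀ u v, G.Adj u v → (lab u v = U ↔ lab v u = D)
  hd : ∀ u, HasLab G lab u R → HasLab G lab u U →
    ∃ a b c, G.Adj u a ∧ lab u a = R ∧ G.Adj a b ∧ lab a b = U ∧
      G.Adj b c ∧ lab b c = L ∧ G.Adj c u ∧ lab c u = D
  he : ∀ u v, G.Adj u v → lab u v = R →
    ((HasLab G lab u D ↔ HasLab G lab v D) ∧ (HasLab G lab u U ↔ HasLab G lab v U))
  hf : ∀ u v, G.Adj u v → lab u v = U →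
    ((HasLab G lab u L ↔ HasLab G lab v L) ∧ (HasLab G lab u R ↔ HasLab G lab v R))
  conn : G.Connected
  noD : ∃ u, ¬ HasLab G lab u D
  noL : ∃ u, ¬ HasLab G lab u L

namespace GridSetup

attribute [local instance] Classical.propDecidable

open GridLabel

variable {V : Type*} (S : GridSetup V)

def Has (u : V) (a : GridLabel) : Prop := HasLab S.G S.lab u a

noncomputable def stp (a : GridLabel) (u : V) : V :=
  if h : S.Has u a then h.choose else u

theorem adj_stp {u : V} {a : GridLabel} (h : S.Has u a) : S.G.Adj u (S.stp a u) := by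
  rw [stp, dif_pos h]; exact h.choose_spec.1

theorem lab_stp {u : V} {a : GridLabel} (h : S.Has u a) : S.lab u (S.stp a u) = a := by
  rw [stp, dif_pos h]; exact h.choose_spec.2

theorem stp_of_not {u : V} {a : GridLabel} (h : ¬ S.Has u a) : S.stp a u = u :=
  dif_neg h

theorem stp_eq {u v : V} {a : GridLabel} (h : S.G.Adj u v) (hl : S.lab u v = a) :
    S.stp a u = v := by
  have hv : S.Has u a := ⟨v, h, hl⟩
  by_contra hne
  exact S.ha u (S.stp a u) v (S.adj_stp hv) h hne (by rw [S.lab_stp hv, hl])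

theorem lab_RL {u v : V} (h : S.G.Adj u v) (hl : S.lab u v = R) : S.lab v u = L :=
  (S.hb v u h.symm).mpr hl

theorem lab_LR {u v : V} (h : S.G.Adj u v) (hl : S.lab u v = L) : S.lab v u = R :=
  (S.hb u v h).mp hl

theorem lab_UD {u v : V} (h : S.G.Adj u v) (hl : S.lab u v = U) : S.lab v u = D :=
  (S.hc u v h).mp hl

theorem lab_DU {u v : V} (h : S.G.Adj u v) (hl : S.lab u v = D) : S.lab v u = U :=
  (S.hc v u h.symm).mpr hl

theorem hasL_stpR {u : V} (h : S.Has u R) : S.Has (S.stp R u) L :=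
  ⟨u, (S.adj_stp h).symm, S.lab_RL (S.adj_stp h) (S.lab_stp h)⟩

theorem hasR_stpL {u : V} (h : S.Has u L) : S.Has (S.stp L u) R :=
  ⟨u, (S.adj_stp h).symm, S.lab_LR (S.adj_stp h) (S.lab_stp h)⟩

theorem hasD_stpU {u : V} (h : S.Has u U) : S.Has (S.stp U u) D :=
  ⟨u, (S.adj_stp h).symm, S.lab_UD (S.adj_stp h) (S.lab_stp h)⟩

theorem hasU_stpD {u : V} (h : S.Has u D) : S.Has (S.stp D u) U :=
  ⟨u, (S.adj_stp h).symm, S.lab_DU (S.adj_stp h) (S.lab_stp h)⟩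

theorem stpL_stpR {u : V} (h : S.Has u R) : S.stp L (S.stp R u) = u :=
  S.stp_eq (S.adj_stp h).symm (S.lab_RL (S.adj_stp h) (S.lab_stp h))

theorem stpR_stpL {u : V} (h : S.Has u L) : S.stp R (S.stp L u) = u :=
  S.stp_eq (S.adj_stp h).symm (S.lab_LR (S.adj_stp h) (S.lab_stp h))

theorem stpD_stpU {u : V} (h : S.Has u U) : S.stp D (S.stp U u) = u :=
  S.stp_eq (S.adj_stp h).symm (S.lab_UD (S.adj_stp h) (S.lab_stp h))

theorem stpU_stpD {u : V} (h : S.Has u D) : S.stp U (S.stp D u) = u :=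
  S.stp_eq (S.adj_stp h).symm (S.lab_DU (S.adj_stp h) (S.lab_stp h))

/- unconditional transfer of Has along steps -/
theorem hasD_stpR (u : V) : S.Has (S.stp R u) D ↔ S.Has u D := by
  by_cases h : S.Has u R
  · exact ((S.he u (S.stp R u) (S.adj_stp h) (S.lab_stp h)).1).symm
  · rw [S.stp_of_not h]

theorem hasU_stpR (u : V) : S.Has (S.stp R u) U ↔ S.Has u U := by
  by_cases h : S.Has u R
  · exact ((S.he u (S.stp R u) (S.adj_stp h) (S.lab_stp h)).2).symm
  · rw [S.stp_of_not h]

theorem hasD_stpL (u : V) : S.Has (S.stp L u) D ↔ S.Has u D := by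
  by_cases h : S.Has u L
  · exact (S.he (S.stp L u) u (S.adj_stp h).symm
      (S.lab_LR (S.adj_stp h) (S.lab_stp h))).1
  · rw [S.stp_of_not h]

theorem hasU_stpL (u : V) : S.Has (S.stp L u) U ↔ S.Has u U := by
  by_cases h : S.Has u L
  · exact (S.he (S.stp L u) u (S.adj_stp h).symm
      (S.lab_LR (S.adj_stp h) (S.lab_stp h))).2
  · rw [S.stp_of_not h]

theorem hasL_stpU (u : V) : S.Has (S.stp U u) L ↔ S.Has u L := by
  by_cases h : S.Has u U
  · exact ((S.hf u (S.stp U u) (S.adj_stp h) (S.lab_stp h)).1).symm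
  · rw [S.stp_of_not h]

theorem hasR_stpU (u : V) : S.Has (S.stp U u) R ↔ S.Has u R := by
  by_cases h : S.Has u U
  · exact ((S.hf u (S.stp U u) (S.adj_stp h) (S.lab_stp h)).2).symm
  · rw [S.stp_of_not h]

theorem hasL_stpD (u : V) : S.Has (S.stp D u) L ↔ S.Has u L := by
  by_cases h : S.Has u D
  · exact (S.hf (S.stp D u) u (S.adj_stp h).symm
      (S.lab_DU (S.adj_stp h) (S.lab_stp h))).1
  · rw [S.stp_of_not h]

theorem hasR_stpD (u : V) : S.Has (S.stp D u) R ↔ S.Has u R := by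
  by_cases h : S.Has u D
  · exact (S.hf (S.stp D u) u (S.adj_stp h).symm
      (S.lab_DU (S.adj_stp h) (S.lab_stp h))).2
  · rw [S.stp_of_not h]

/- the square lemma -/
theorem sq {u : V} (hr : S.Has u R) (hu : S.Has u U) :
    S.stp U (S.stp R u) = S.stp R (S.stp U u) := by
  obtain ⟨a, b, c, h1, h2, h3, h4, h5, h6, h7, h8⟩ := S.hd u hr hu
  have hau : S.stp R u = a := S.stp_eq h1 h2
  have hbu : S.stp U a = b := S.stp_eq h3 h4
  have hcu : S.stp U u = c := S.stp_eq h7.symm (S.lab_DU h7 h8)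
  have hcb : S.stp R c = b := S.stp_eq h5.symm (S.lab_LR h5 h6)
  rw [hau, hbu, hcu, hcb]

theorem comm_UL {u : V} (hl : S.Has u L) (hu : S.Has u U) :
    S.stp U (S.stp L u) = S.stp L (S.stp U u) := by
  set w := S.stp L u with hw
  have hrw : S.Has w R := S.hasR_stpL hl
  have huw : S.Has w U := (S.hasU_stpL u).mpr hu
  have h1 := S.sq hrw huw
  rw [S.stpR_stpL hl] at h1
  -- h1 : stp U u = stp R (stp U w)
  have h2 : S.Has (S.stp U w) R := (S.hasR_stpU w).mpr hrw
  have := congrArg (S.stp L) h1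
  rw [S.stpL_stpR h2] at this
  exact this.symm

theorem comm_DR {u : V} (hr : S.Has u R) (hdd : S.Has u D) :
    S.stp D (S.stp R u) = S.stp R (S.stp D u) := by
  set w := S.stp D u with hw
  have huw : S.Has w U := S.hasU_stpD hdd
  have hrw : S.Has w R := (S.hasR_stpD u).mpr hr
  have h1 := S.sq hrw huw
  rw [S.stpU_stpD hdd] at h1
  -- h1 : stp U (stp R w) = stp R u
  have h2 : S.Has (S.stp R w) U := (S.hasU_stpR w).mpr huw
  have := congrArg (S.stp D) h1
  rw [S.stpD_stpU h2] at this
  exact this.symm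

theorem comm_DL {u : V} (hl : S.Has u L) (hdd : S.Has u D) :
    S.stp D (S.stp L u) = S.stp L (S.stp D u) := by
  set w := S.stp L u with hw
  have hrw : S.Has w R := S.hasR_stpL hl
  have hdw : S.Has w D := (S.hasD_stpL u).mpr hdd
  have h1 := S.comm_DR hrw hdw
  rw [S.stpR_stpL hl] at h1
  -- h1 : stp D u = stp R (stp D w)
  have h2 : S.Has (S.stp D w) R := (S.hasR_stpD w).mpr hrw
  have := congrArg (S.stp L) h1
  rw [S.stpL_stpR h2] at this
  exact this.symm


/-! ### Termination of leftward / downward walks -/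

def XA (u : V) : Prop := ∃ n, ¬ S.Has ((S.stp L)^[n] u) L

def YA (u : V) : Prop := ∃ n, ¬ S.Has ((S.stp D)^[n] u) D

theorem XA_stpR {u : V} (h : S.XA u) : S.XA (S.stp R u) := by
  by_cases hr : S.Has u R
  · obtain ⟨n, hn⟩ := h
    exact ⟨n + 1, by rwa [Function.iterate_succ_apply, S.stpL_stpR hr]⟩
  · rwa [S.stp_of_not hr]

theorem XA_of_stpL {u : V} (hl : S.Has u L) (h : S.XA (S.stp L u)) : S.XA u := by
  obtain ⟨n, hn⟩ := h
  exact ⟨n + 1, by rwa [Function.iterate_succ_apply]⟩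

theorem YA_of_stpD {u : V} (hdd : S.Has u D) (h : S.YA (S.stp D u)) : S.YA u := by
  obtain ⟨n, hn⟩ := h
  exact ⟨n + 1, by rwa [Function.iterate_succ_apply]⟩

theorem XA_stpL {u : V} (h : S.XA u) : S.XA (S.stp L u) := by
  by_cases hl : S.Has u L
  · obtain ⟨n, hn⟩ := h
    match n with
    | 0 => exact absurd hl hn
    | m + 1 => exact ⟨m, by rwa [Function.iterate_succ_apply] at hn⟩
  · rwa [S.stp_of_not hl]

theorem YA_stpD {u : V} (h : S.YA u) : S.YA (S.stp D u) := by
  by_cases hl : S.Has u D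
  · obtain ⟨n, hn⟩ := h
    match n with
    | 0 => exact absurd hl hn
    | m + 1 => exact ⟨m, by rwa [Function.iterate_succ_apply] at hn⟩
  · rwa [S.stp_of_not hl]

theorem YA_stpU {u : V} (h : S.YA u) : S.YA (S.stp U u) := by
  by_cases hu : S.Has u U
  · obtain ⟨n, hn⟩ := h
    exact ⟨n + 1, by rwa [Function.iterate_succ_apply, S.stpD_stpU hu]⟩
  · rwa [S.stp_of_not hu]

theorem XA_stpU_aux : ∀ n, ∀ u : V, ¬ S.Has ((S.stp L)^[n] u) L → S.XA (S.stp U u) := by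
  intro n
  induction n with
  | zero =>
    intro u hu
    by_cases hU : S.Has u U
    · exact ⟨0, by simpa [S.hasL_stpU] using hu⟩
    · rw [S.stp_of_not hU]; exact ⟨0, hu⟩
  | succ n ih =>
    intro u hn
    by_cases hL : S.Has u L
    · by_cases hU : S.Has u U
      · set w := S.stp L u with hw
        rw [Function.iterate_succ_apply] at hn
        have h1 : S.XA (S.stp U w) := ih w hn
        have h2 := S.comm_UL hL hU
        -- h2 : stp U w = stp L (stp U u)
        have h3 : S.Has (S.stp U u) L := (S.hasL_stpU u).mpr hL
        have h4 : S.stp R (S.stp U w) = S.stp U u := by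
          rw [h2, S.stpR_stpL h3]
        have := S.XA_stpR h1
        rwa [h4] at this
      · rw [S.stp_of_not hU]; exact ⟨n + 1, hn⟩
    · rw [Function.iterate_succ_apply, S.stp_of_not hL] at hn
      exact ih u hn

theorem XA_stpU {u : V} (h : S.XA u) : S.XA (S.stp U u) := by
  obtain ⟨n, hn⟩ := h; exact S.XA_stpU_aux n u hn

theorem XA_stpD_aux : ∀ n, ∀ u : V, ¬ S.Has ((S.stp L)^[n] u) L → S.XA (S.stp D u) := by
  intro n
  induction n with
  | zero =>
    intro u hu
    exact ⟨0, by simpa [S.hasL_stpD] using hu⟩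
  | succ n ih =>
    intro u hn
    by_cases hL : S.Has u L
    · by_cases hD : S.Has u D
      · set w := S.stp L u with hw
        rw [Function.iterate_succ_apply] at hn
        have h1 : S.XA (S.stp D w) := ih w hn
        have h2 := S.comm_DL hL hD
        -- h2 : stp D w = stp L (stp D u)
        have h3 : S.Has (S.stp D u) L := (S.hasL_stpD u).mpr hL
        have h4 : S.stp R (S.stp D w) = S.stp D u := by
          rw [h2, S.stpR_stpL h3]
        have := S.XA_stpR h1
        rwa [h4] at this
      · rw [S.stp_of_not hD]; exact ⟨n + 1, hn⟩
    · rw [Function.iterate_succ_apply, S.stp_of_not hL] at hn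
      exact ih u hn

theorem XA_stpD {u : V} (h : S.XA u) : S.XA (S.stp D u) := by
  obtain ⟨n, hn⟩ := h; exact S.XA_stpD_aux n u hn

theorem YA_stpR_aux : ∀ n, ∀ u : V, ¬ S.Has ((S.stp D)^[n] u) D → S.YA (S.stp R u) := by
  intro n
  induction n with
  | zero =>
    intro u hu
    exact ⟨0, by simpa [S.hasD_stpR] using hu⟩
  | succ n ih =>
    intro u hn
    by_cases hD : S.Has u D
    · by_cases hR : S.Has u R
      · set w := S.stp D u with hw
        rw [Function.iterate_succ_apply] at hn
        have h1 : S.YA (S.stp R w) := ih w hn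
        have h2 := S.comm_DR hR hD
        -- h2 : stp D (stp R u) = stp R w
        have h3 : S.Has (S.stp R u) D := (S.hasD_stpR u).mpr hD
        exact S.YA_of_stpD h3 (h2 ▸ h1)
      · rw [S.stp_of_not hR]; exact ⟨n + 1, hn⟩
    · rw [Function.iterate_succ_apply, S.stp_of_not hD] at hn
      exact ih u hn

theorem YA_stpR {u : V} (h : S.YA u) : S.YA (S.stp R u) := by
  obtain ⟨n, hn⟩ := h; exact S.YA_stpR_aux n u hn

theorem YA_stpL_aux : ∀ n, ∀ u : V, ¬ S.Has ((S.stp D)^[n] u) D → S.YA (S.stp L u) := by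
  intro n
  induction n with
  | zero =>
    intro u hu
    exact ⟨0, by simpa [S.hasD_stpL] using hu⟩
  | succ n ih =>
    intro u hn
    by_cases hD : S.Has u D
    · by_cases hL : S.Has u L
      · set w := S.stp D u with hw
        rw [Function.iterate_succ_apply] at hn
        have h1 : S.YA (S.stp L w) := ih w hn
        have h2 := S.comm_DL hL hD
        -- h2 : stp D (stp L u) = stp L w
        have h3 : S.Has (S.stp L u) D := (S.hasD_stpL u).mpr hD
        exact S.YA_of_stpD h3 (h2 ▸ h1)
      · rw [S.stp_of_not hL]; exact ⟨n + 1, hn⟩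
    · rw [Function.iterate_succ_apply, S.stp_of_not hD] at hn
      exact ih u hn

theorem YA_stpL {u : V} (h : S.YA u) : S.YA (S.stp L u) := by
  obtain ⟨n, hn⟩ := h; exact S.YA_stpL_aux n u hn

theorem XA_adj {u v : V} (h : S.G.Adj u v) (hu : S.XA u) : S.XA v := by
  rcases hl : S.lab u v with _ | _ | _ | _
  · rw [← S.stp_eq h hl]; exact S.XA_stpU hu
  · rw [← S.stp_eq h hl]; exact S.XA_stpD hu
  · rw [← S.stp_eq h hl]; exact S.XA_stpL hu
  · rw [← S.stp_eq h hl]; exact S.XA_stpR hu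

theorem YA_adj {u v : V} (h : S.G.Adj u v) (hu : S.YA u) : S.YA v := by
  rcases hl : S.lab u v with _ | _ | _ | _
  · rw [← S.stp_eq h hl]; exact S.YA_stpU hu
  · rw [← S.stp_eq h hl]; exact S.YA_stpD hu
  · rw [← S.stp_eq h hl]; exact S.YA_stpL hu
  · rw [← S.stp_eq h hl]; exact S.YA_stpR hu

theorem XA_walk : ∀ {a b : V}, S.G.Walk a b → S.XA a → S.XA b := by
  intro a b p
  induction p with
  | nil => exact id
  | cons h _ ih => exact fun hx => ih (S.XA_adj h hx)

theorem YA_walk : ∀ {a b : V}, S.G.Walk a b → S.YA a → S.YA b := by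
  intro a b p
  induction p with
  | nil => exact id
  | cons h _ ih => exact fun hx => ih (S.YA_adj h hx)

theorem XA_all (u : V) : S.XA u := by
  obtain ⟨z, hz⟩ := S.noL
  obtain ⟨p⟩ := S.conn z u
  exact S.XA_walk p ⟨0, hz⟩

theorem YA_all (u : V) : S.YA u := by
  obtain ⟨z, hz⟩ := S.noD
  obtain ⟨p⟩ := S.conn z u
  exact S.YA_walk p ⟨0, hz⟩

/-! ### Coordinates -/

noncomputable def xc (u : V) : ℕ := Nat.find (S.XA_all u)

noncomputable def yc (u : V) : ℕ := Nat.find (S.YA_all u)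

theorem xc_spec (u : V) : ¬ S.Has ((S.stp L)^[S.xc u] u) L := Nat.find_spec (S.XA_all u)

theorem yc_spec (u : V) : ¬ S.Has ((S.stp D)^[S.yc u] u) D := Nat.find_spec (S.YA_all u)

theorem xc_eq_zero {u : V} : S.xc u = 0 ↔ ¬ S.Has u L := by
  exact (Nat.find_eq_zero (S.XA_all u)).trans (by simp)

theorem yc_eq_zero {u : V} : S.yc u = 0 ↔ ¬ S.Has u D := by
  exact (Nat.find_eq_zero (S.YA_all u)).trans (by simp)

theorem hasL_of_xc_pos {u : V} (h : 0 < S.xc u) : S.Has u L := by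
  by_contra hc; rw [S.xc_eq_zero.mpr hc] at h; exact Nat.lt_irrefl 0 h

theorem hasD_of_yc_pos {u : V} (h : 0 < S.yc u) : S.Has u D := by
  by_contra hc; rw [S.yc_eq_zero.mpr hc] at h; exact Nat.lt_irrefl 0 h

theorem xc_stpL_succ {u : V} (hl : S.Has u L) : S.xc u = S.xc (S.stp L u) + 1 := by
  have h1 : S.xc u ≤ S.xc (S.stp L u) + 1 := by
    apply Nat.find_min' (S.XA_all u)
    rw [Function.iterate_succ_apply]
    exact S.xc_spec (S.stp L u)
  have h0 : S.xc u ≠ 0 := fun h => (S.xc_eq_zero.mp h) hl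
  obtain ⟨m, hm⟩ := Nat.exists_eq_succ_of_ne_zero h0
  have h2 : S.xc (S.stp L u) ≤ m := by
    apply Nat.find_min' (S.XA_all (S.stp L u))
    rw [← Function.iterate_succ_apply, ← hm]
    exact S.xc_spec u
  omega

theorem yc_stpD_succ {u : V} (hl : S.Has u D) : S.yc u = S.yc (S.stp D u) + 1 := by
  have h1 : S.yc u ≤ S.yc (S.stp D u) + 1 := by
    apply Nat.find_min' (S.YA_all u)
    rw [Function.iterate_succ_apply]
    exact S.yc_spec (S.stp D u)
  have h0 : S.yc u ≠ 0 := fun h => (S.yc_eq_zero.mp h) hl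
  obtain ⟨m, hm⟩ := Nat.exists_eq_succ_of_ne_zero h0
  have h2 : S.yc (S.stp D u) ≤ m := by
    apply Nat.find_min' (S.YA_all (S.stp D u))
    rw [← Function.iterate_succ_apply, ← hm]
    exact S.yc_spec u
  omega

theorem xc_stpR {u : V} (hr : S.Has u R) : S.xc (S.stp R u) = S.xc u + 1 := by
  have := S.xc_stpL_succ (S.hasL_stpR hr)
  rwa [S.stpL_stpR hr] at this

theorem yc_stpU {u : V} (hu : S.Has u U) : S.yc (S.stp U u) = S.yc u + 1 := by
  have := S.yc_stpD_succ (S.hasD_stpU hu)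
  rwa [S.stpD_stpU hu] at this

theorem xc_stpU (u : V) : S.xc (S.stp U u) = S.xc u := by
  suffices h : ∀ n, ∀ u : V, S.xc u = n → S.xc (S.stp U u) = n by exact h _ u rfl
  intro n
  induction n with
  | zero =>
    intro u hn
    by_cases hU : S.Has u U
    · exact S.xc_eq_zero.mpr ((S.hasL_stpU u).not.mpr (S.xc_eq_zero.mp hn))
    · rwa [S.stp_of_not hU]
  | succ n ih =>
    intro u hn
    by_cases hU : S.Has u U
    · have hL : S.Has u L := S.hasL_of_xc_pos (by omega)
      set w := S.stp L u with hw
      have hwn : S.xc w = n := by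
        have h5 := S.xc_stpL_succ hL; rw [← hw] at h5; omega
      have hUw : S.Has w U := (S.hasU_stpL u).mpr hU
      have h2 := S.comm_UL hL hU
      -- h2 : stp U w = stp L (stp U u)
      have h3 : S.Has (S.stp U u) L := (S.hasL_stpU u).mpr hL
      have h4 := S.xc_stpL_succ h3
      rw [← h2, ih w hwn] at h4
      omega
    · rwa [S.stp_of_not hU]

theorem xc_stpD (u : V) : S.xc (S.stp D u) = S.xc u := by
  by_cases hD : S.Has u D
  · have h1 := S.xc_stpU (S.stp D u)
    rw [S.stpU_stpD hD] at h1
    exact h1.symm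
  · rw [S.stp_of_not hD]

theorem yc_stpR (u : V) : S.yc (S.stp R u) = S.yc u := by
  suffices h : ∀ n, ∀ u : V, S.yc u = n → S.yc (S.stp R u) = n by exact h _ u rfl
  intro n
  induction n with
  | zero =>
    intro u hn
    by_cases hR : S.Has u R
    · exact S.yc_eq_zero.mpr ((S.hasD_stpR u).not.mpr (S.yc_eq_zero.mp hn))
    · rwa [S.stp_of_not hR]
  | succ n ih =>
    intro u hn
    by_cases hR : S.Has u R
    · have hD : S.Has u D := S.hasD_of_yc_pos (by omega)
      set w := S.stp D u with hw
      have hwn : S.yc w = n := by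
        have h5 := S.yc_stpD_succ hD; rw [← hw] at h5; omega
      have hRw : S.Has w R := (S.hasR_stpD u).mpr hR
      have h2 := S.comm_DR hR hD
      -- h2 : stp D (stp R u) = stp R w
      have h3 : S.Has (S.stp R u) D := (S.hasD_stpR u).mpr hD
      have h4 := S.yc_stpD_succ h3
      rw [h2, ih w hwn] at h4
      omega
    · rwa [S.stp_of_not hR]

theorem yc_stpL (u : V) : S.yc (S.stp L u) = S.yc u := by
  by_cases hL : S.Has u L
  · have h1 := S.yc_stpR (S.stp L u)
    rw [S.stpR_stpL hL] at h1
    exact h1.symm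
  · rw [S.stp_of_not hL]

theorem xc_iterD (k : ℕ) (u : V) : S.xc ((S.stp D)^[k] u) = S.xc u := by
  induction k with
  | zero => rfl
  | succ k ih => rw [Function.iterate_succ_apply', S.xc_stpD, ih]

theorem xc_iterU (k : ℕ) (u : V) : S.xc ((S.stp U)^[k] u) = S.xc u := by
  induction k with
  | zero => rfl
  | succ k ih => rw [Function.iterate_succ_apply', S.xc_stpU, ih]

theorem yc_iterL (k : ℕ) (u : V) : S.yc ((S.stp L)^[k] u) = S.yc u := by
  induction k with
  | zero => rfl
  | succ k ih => rw [Function.iterate_succ_apply', S.yc_stpL, ih]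

theorem yc_iterR (k : ℕ) (u : V) : S.yc ((S.stp R)^[k] u) = S.yc u := by
  induction k with
  | zero => rfl
  | succ k ih => rw [Function.iterate_succ_apply', S.yc_stpR, ih]

theorem xc_iterL {k : ℕ} {u : V} (h : k ≤ S.xc u) : S.xc ((S.stp L)^[k] u) = S.xc u - k := by
  induction k with
  | zero => rfl
  | succ k ih =>
    have hk : k ≤ S.xc u := by omega
    have hx := ih hk
    have hpos : 0 < S.xc ((S.stp L)^[k] u) := by omega
    have hL := S.hasL_of_xc_pos hpos
    rw [Function.iterate_succ_apply']
    have := S.xc_stpL_succ hL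
    omega

theorem yc_iterD {k : ℕ} {u : V} (h : k ≤ S.yc u) : S.yc ((S.stp D)^[k] u) = S.yc u - k := by
  induction k with
  | zero => rfl
  | succ k ih =>
    have hk : k ≤ S.yc u := by omega
    have hx := ih hk
    have hpos : 0 < S.yc ((S.stp D)^[k] u) := by omega
    have hD := S.hasD_of_yc_pos hpos
    rw [Function.iterate_succ_apply']
    have := S.yc_stpD_succ hD
    omega

theorem up_down {k : ℕ} {u : V} (h : k ≤ S.yc u) : (S.stp U)^[k] ((S.stp D)^[k] u) = u := by
  induction k generalizing u with
  | zero => rfl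
  | succ k ih =>
    have hD : S.Has u D := S.hasD_of_yc_pos (by omega)
    rw [Function.iterate_succ_apply (S.stp D), Function.iterate_succ_apply' (S.stp U)]
    have hk : k ≤ S.yc (S.stp D u) := by have := S.yc_stpD_succ hD; omega
    rw [ih hk, S.stpU_stpD hD]

theorem right_left {k : ℕ} {u : V} (h : k ≤ S.xc u) : (S.stp R)^[k] ((S.stp L)^[k] u) = u := by
  induction k generalizing u with
  | zero => rfl
  | succ k ih =>
    have hL : S.Has u L := S.hasL_of_xc_pos (by omega)
    rw [Function.iterate_succ_apply (S.stp L), Function.iterate_succ_apply' (S.stp R)]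
    have hk : k ≤ S.xc (S.stp L u) := by have := S.xc_stpL_succ hL; omega
    rw [ih hk, S.stpR_stpL hL]

/-! ### Origin and representation -/

theorem hasL_iterD (k : ℕ) (u : V) : S.Has ((S.stp D)^[k] u) L ↔ S.Has u L := by
  induction k with
  | zero => rfl
  | succ k ih => rw [Function.iterate_succ_apply', S.hasL_stpD, ih]

theorem hasU_iterR (k : ℕ) (u : V) : S.Has ((S.stp R)^[k] u) U ↔ S.Has u U := by
  induction k with
  | zero => rfl
  | succ k ih => rw [Function.iterate_succ_apply', S.hasU_stpR, ih]

theorem hasR_iterU (k : ℕ) (u : V) : S.Has ((S.stp U)^[k] u) R ↔ S.Has u R := by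
  induction k with
  | zero => rfl
  | succ k ih => rw [Function.iterate_succ_apply', S.hasR_stpU, ih]

theorem hasU_iterL (k : ℕ) (u : V) : S.Has ((S.stp L)^[k] u) U ↔ S.Has u U := by
  induction k with
  | zero => rfl
  | succ k ih => rw [Function.iterate_succ_apply', S.hasU_stpL, ih]

noncomputable def org : V := (S.stp D)^[S.yc S.noL.choose] S.noL.choose

theorem yc_org : S.yc S.org = 0 := by
  rw [org, S.yc_iterD (le_refl _)]; omega

theorem not_hasL_org : ¬ S.Has S.org L := by
  rw [org, S.hasL_iterD]; exact S.noL.choose_spec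

theorem xc_org : S.xc S.org = 0 := S.xc_eq_zero.mpr S.not_hasL_org

noncomputable def rho (u : V) : V := (S.stp D)^[S.yc u] ((S.stp L)^[S.xc u] u)

theorem rho_org : S.rho S.org = S.org := by
  rw [rho, S.xc_org, S.yc_org]; rfl

theorem rho_stpR {u : V} (hr : S.Has u R) : S.rho (S.stp R u) = S.rho u := by
  rw [rho, rho, S.xc_stpR hr, S.yc_stpR, Function.iterate_succ_apply, S.stpL_stpR hr]

theorem iterL_stpU : ∀ k, ∀ u : V, k ≤ S.xc u → S.Has u U →
    (S.stp L)^[k] (S.stp U u) = S.stp U ((S.stp L)^[k] u) := by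
  intro k
  induction k with
  | zero => intro u _ _; rfl
  | succ k ih =>
    intro u hk hU
    have hL : S.Has u L := S.hasL_of_xc_pos (by omega)
    rw [Function.iterate_succ_apply (S.stp L), ← S.comm_UL hL hU]
    have hk' : k ≤ S.xc (S.stp L u) := by have := S.xc_stpL_succ hL; omega
    have hU' : S.Has (S.stp L u) U := (S.hasU_stpL u).mpr hU
    rw [ih (S.stp L u) hk' hU', ← Function.iterate_succ_apply (S.stp L)]

theorem rho_stpU {u : V} (hu : S.Has u U) : S.rho (S.stp U u) = S.rho u := by
  rw [rho, rho, S.xc_stpU, S.yc_stpU hu]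
  rw [S.iterL_stpU (S.xc u) u (le_refl _) hu]
  have hUw : S.Has ((S.stp L)^[S.xc u] u) U := (S.hasU_iterL _ u).mpr hu
  rw [Function.iterate_succ_apply (S.stp D), S.stpD_stpU hUw]

theorem rho_adj {u v : V} (h : S.G.Adj u v) : S.rho u = S.rho v := by
  rcases hl : S.lab u v with _ | _ | _ | _
  · rw [← S.stp_eq h hl]; exact (S.rho_stpU ⟨v, h, hl⟩).symm
  · have h2 : S.stp U v = u := S.stp_eq h.symm (S.lab_DU h hl)
    rw [← h2]; exact S.rho_stpU ⟨u, h.symm, S.lab_DU h hl⟩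
  · have h2 : S.stp R v = u := S.stp_eq h.symm (S.lab_LR h hl)
    rw [← h2]; exact S.rho_stpR ⟨u, h.symm, S.lab_LR h hl⟩
  · rw [← S.stp_eq h hl]; exact (S.rho_stpR ⟨v, h, hl⟩).symm

theorem rho_const (u : V) : S.rho u = S.org := by
  obtain ⟨p⟩ := S.conn u S.org
  have : ∀ {a b : V}, S.G.Walk a b → S.rho a = S.rho b := by
    intro a b p
    induction p with
    | nil => rfl
    | cons h _ ih => rw [S.rho_adj h]; exact ih
  rw [this p, S.rho_org]

theorem rep1 (u : V) : u = (S.stp R)^[S.xc u] ((S.stp U)^[S.yc u] S.org) := by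
  have h1 : (S.stp D)^[S.yc u] ((S.stp L)^[S.xc u] u) = S.org := S.rho_const u
  set w := (S.stp L)^[S.xc u] u with hw
  have hyw : S.yc w = S.yc u := S.yc_iterL _ u
  have h2 : (S.stp U)^[S.yc u] S.org = w := by
    rw [← h1, ← hyw, S.up_down (le_refl _)]
  rw [h2, hw, S.right_left (le_refl _)]

theorem rep2 (u : V) : u = (S.stp U)^[S.yc u] ((S.stp R)^[S.xc u] S.org) := by
  suffices h : ∀ n, ∀ u : V, S.yc u = n → u = (S.stp U)^[n] ((S.stp R)^[S.xc u] S.org) by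
    exact h _ u rfl
  intro n
  induction n with
  | zero =>
    intro u hn
    have := S.rep1 u
    rwa [hn] at this
  | succ n ih =>
    intro u hn
    have hD : S.Has u D := S.hasD_of_yc_pos (by omega)
    have hyv : S.yc (S.stp D u) = n := by have := S.yc_stpD_succ hD; omega
    have hxv : S.xc (S.stp D u) = S.xc u := S.xc_stpD u
    have h1 := ih (S.stp D u) hyv
    rw [hxv] at h1
    rw [Function.iterate_succ_apply' (S.stp U), ← h1, S.stpU_stpD hD]

theorem coord_inj {u v : V} (hx : S.xc u = S.xc v) (hy : S.yc u = S.yc v) : u = v := by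
  rw [S.rep1 u, S.rep1 v, hx, hy]

theorem hasR_congr {u v : V} (h : S.xc u = S.xc v) : (S.Has u R ↔ S.Has v R) := by
  have h1 := S.hasR_iterU (S.yc u) ((S.stp R)^[S.xc u] S.org)
  rw [← S.rep2 u] at h1
  have h2 := S.hasR_iterU (S.yc v) ((S.stp R)^[S.xc v] S.org)
  rw [← S.rep2 v] at h2
  rw [h1, h2, h]

theorem hasU_congr {u v : V} (h : S.yc u = S.yc v) : (S.Has u U ↔ S.Has v U) := by
  have h1 := S.hasU_iterR (S.xc u) ((S.stp U)^[S.yc u] S.org)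
  rw [← S.rep1 u] at h1
  have h2 := S.hasU_iterR (S.xc v) ((S.stp U)^[S.yc v] S.org)
  rw [← S.rep1 v] at h2
  rw [h1, h2, h]

/-! ### Extremes and the rectangle -/

section Fin
variable [Fintype V]

noncomputable def xmax : ℕ := Finset.univ.sup S.xc

noncomputable def ymax : ℕ := Finset.univ.sup S.yc

theorem xc_le_xmax (u : V) : S.xc u ≤ S.xmax := Finset.le_sup (Finset.mem_univ u)

theorem yc_le_ymax (u : V) : S.yc u ≤ S.ymax := Finset.le_sup (Finset.mem_univ u)

theorem exists_xc_eq_xmax : ∃ m : V, S.xc m = S.xmax := by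
  have : Nonempty V := S.conn.nonempty
  obtain ⟨m, -, hm⟩ := Finset.exists_mem_eq_sup Finset.univ Finset.univ_nonempty S.xc
  exact ⟨m, hm.symm⟩

theorem exists_yc_eq_ymax : ∃ m : V, S.yc m = S.ymax := by
  have : Nonempty V := S.conn.nonempty
  obtain ⟨m, -, hm⟩ := Finset.exists_mem_eq_sup Finset.univ Finset.univ_nonempty S.yc
  exact ⟨m, hm.symm⟩

theorem hasR_of_lt {u : V} (h : S.xc u < S.xmax) : S.Has u R := by
  obtain ⟨m, hm⟩ := S.exists_xc_eq_xmax
  have hlt : S.xc u < S.xc m := by omega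
  set j := S.xc m - S.xc u - 1 with hj
  have hjle : j ≤ S.xc m := by omega
  have hz : S.xc ((S.stp L)^[j] m) = S.xc u + 1 := by rw [S.xc_iterL hjle]; omega
  have hL : S.Has ((S.stp L)^[j] m) L := S.hasL_of_xc_pos (by omega)
  have hx2 : S.xc (S.stp L ((S.stp L)^[j] m)) = S.xc u := by
    have := S.xc_stpL_succ hL; omega
  have hR : S.Has (S.stp L ((S.stp L)^[j] m)) R := S.hasR_stpL hL
  exact (S.hasR_congr hx2.symm).mpr hR

theorem hasU_of_lt {u : V} (h : S.yc u < S.ymax) : S.Has u U := by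
  obtain ⟨m, hm⟩ := S.exists_yc_eq_ymax
  have hlt : S.yc u < S.yc m := by omega
  set j := S.yc m - S.yc u - 1 with hj
  have hjle : j ≤ S.yc m := by omega
  have hz : S.yc ((S.stp D)^[j] m) = S.yc u + 1 := by rw [S.yc_iterD hjle]; omega
  have hD : S.Has ((S.stp D)^[j] m) D := S.hasD_of_yc_pos (by omega)
  have hy2 : S.yc (S.stp D ((S.stp D)^[j] m)) = S.yc u := by
    have := S.yc_stpD_succ hD; omega
  have hU : S.Has (S.stp D ((S.stp D)^[j] m)) U := S.hasU_stpD hD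
  exact (S.hasU_congr hy2.symm).mpr hU

theorem base_coord {i : ℕ} (h : i ≤ S.xmax) :
    S.xc ((S.stp R)^[i] S.org) = i ∧ S.yc ((S.stp R)^[i] S.org) = 0 := by
  induction i with
  | zero => exact ⟨S.xc_org, S.yc_org⟩
  | succ i ih =>
    obtain ⟨hx, hy⟩ := ih (by omega)
    have hR : S.Has ((S.stp R)^[i] S.org) R := S.hasR_of_lt (by omega)
    rw [Function.iterate_succ_apply']
    exact ⟨by rw [S.xc_stpR hR, hx], by rw [S.yc_stpR, hy]⟩

theorem pt_coord {i j : ℕ} (hi : i ≤ S.xmax) (hj : j ≤ S.ymax) :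
    S.xc ((S.stp U)^[j] ((S.stp R)^[i] S.org)) = i ∧
    S.yc ((S.stp U)^[j] ((S.stp R)^[i] S.org)) = j := by
  induction j with
  | zero => exact S.base_coord hi
  | succ j ih =>
    obtain ⟨hx, hy⟩ := ih (by omega)
    have hU : S.Has ((S.stp U)^[j] ((S.stp R)^[i] S.org)) U := S.hasU_of_lt (by omega)
    rw [Function.iterate_succ_apply']
    exact ⟨by rw [S.xc_stpU, hx], by rw [S.yc_stpU hU, hy]⟩

theorem main : ∃ (w h : ℕ) (φ : V ≃ Fin w × Fin h),
    ∀ u v, S.G.Adj u v ↔ GridAdj (φ u) (φ v) := by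
  refine ⟨S.xmax + 1, S.ymax + 1, Equiv.ofBijective
    (fun u => (⟨S.xc u, by have := S.xc_le_xmax u; omega⟩,
               ⟨S.yc u, by have := S.yc_le_ymax u; omega⟩)) ⟨?_, ?_⟩, ?_⟩
  · intro u v huv
    simp only [Prod.mk.injEq, Fin.mk.injEq] at huv
    exact S.coord_inj huv.1 huv.2
  · rintro ⟨⟨i, hi⟩, ⟨j, hj⟩⟩
    refine ⟨(S.stp U)^[j] ((S.stp R)^[i] S.org), ?_⟩
    obtain ⟨hx, hy⟩ := S.pt_coord (i := i) (j := j) (by omega) (by omega)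
    simp only [Prod.mk.injEq, Fin.mk.injEq]
    exact ⟨hx, hy⟩
  · intro u v
    constructor
    · intro h
      rcases hl : S.lab u v with _ | _ | _ | _
      · -- U edge
        have hv : S.stp U u = v := S.stp_eq h hl
        have hx : S.xc v = S.xc u := by rw [← hv, S.xc_stpU]
        have hy : S.yc v = S.yc u + 1 := by rw [← hv, S.yc_stpU ⟨v, h, hl⟩]
        exact Or.inr (Or.inr (Or.inl ⟨by show S.yc u + 1 = S.yc v; omega, Fin.ext (by show S.xc u = S.xc v; omega)⟩))
      · -- D edge
        have hlu : S.lab v u = U := S.lab_DU h hl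
        have hv : S.stp U v = u := S.stp_eq h.symm hlu
        have hx : S.xc u = S.xc v := by rw [← hv, S.xc_stpU]
        have hy : S.yc u = S.yc v + 1 := by rw [← hv, S.yc_stpU ⟨u, h.symm, hlu⟩]
        exact Or.inr (Or.inr (Or.inr ⟨by show S.yc v + 1 = S.yc u; omega, Fin.ext (by show S.xc u = S.xc v; omega)⟩))
      · -- L edge
        have hlu : S.lab v u = R := S.lab_LR h hl
        have hv : S.stp R v = u := S.stp_eq h.symm hlu
        have hx : S.xc u = S.xc v + 1 := by rw [← hv, S.xc_stpR ⟨u, h.symm, hlu⟩]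
        have hy : S.yc u = S.yc v := by rw [← hv, S.yc_stpR]
        exact Or.inr (Or.inl ⟨by show S.xc v + 1 = S.xc u; omega, Fin.ext (by show S.yc u = S.yc v; omega)⟩)
      · -- R edge
        have hv : S.stp R u = v := S.stp_eq h hl
        have hx : S.xc v = S.xc u + 1 := by rw [← hv, S.xc_stpR ⟨v, h, hl⟩]
        have hy : S.yc v = S.yc u := by rw [← hv, S.yc_stpR]
        exact Or.inl ⟨by show S.xc u + 1 = S.xc v; omega, Fin.ext (by show S.yc u = S.yc v; omega)⟩
    · intro hga
      rcases hga with ⟨h1, h2⟩ | ⟨h1, h2⟩ | ⟨h1, h2⟩ | ⟨h1, h2⟩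
      · simp only [Fin.ext_iff] at h1 h2
        have hx : S.xc u + 1 = S.xc v := h1
        have hy : S.yc u = S.yc v := h2
        have hR : S.Has u R := S.hasR_of_lt (by have := S.xc_le_xmax v; omega)
        have hv : S.stp R u = v :=
          S.coord_inj (by rw [S.xc_stpR hR]; omega) (by rw [S.yc_stpR]; omega)
        exact hv ▸ S.adj_stp hR
      · simp only [Fin.ext_iff] at h1 h2
        have hx : S.xc v + 1 = S.xc u := h1
        have hy : S.yc u = S.yc v := h2
        have hR : S.Has v R := S.hasR_of_lt (by have := S.xc_le_xmax u; omega)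
        have hv : S.stp R v = u :=
          S.coord_inj (by rw [S.xc_stpR hR]; omega) (by rw [S.yc_stpR]; omega)
        exact (hv ▸ S.adj_stp hR).symm
      · simp only [Fin.ext_iff] at h1 h2
        have hy : S.yc u + 1 = S.yc v := h1
        have hx : S.xc u = S.xc v := h2
        have hU : S.Has u U := S.hasU_of_lt (by have := S.yc_le_ymax v; omega)
        have hv : S.stp U u = v :=
          S.coord_inj (by rw [S.xc_stpU]; omega) (by rw [S.yc_stpU hU]; omega)
        exact hv ▸ S.adj_stp hU
      · simp only [Fin.ext_iff] at h1 h2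
        have hy : S.yc v + 1 = S.yc u := h1
        have hx : S.xc u = S.xc v := h2
        have hU : S.Has v U := S.hasU_of_lt (by have := S.yc_le_ymax u; omega)
        have hv : S.stp U v = u :=
          S.coord_inj (by rw [S.xc_stpU]; omega) (by rw [S.yc_stpU hU]; omega)
        exact (hv ▸ S.adj_stp hU).symm

end Fin

end GridSetup

/-- A connected finite graph admitting a half-edge labeling from `{U,D,L,R}` satisfying the
grid constraints, with some node lacking a `D` label and some node lacking an `L` label,
is isomorphic to an `h × w` grid graph. -/
theorem grid_recognition
    {V : Type*} [Fintype V] (G : SimpleGraph V) (hconn : G.Connected)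
    (lab : V → V → GridLabel)
    (ha : ∀ u v w, G.Adj u v → G.Adj u w → v ≠ w → lab u v ≠ lab u w)
    (hb : ∀ u v, G.Adj u v → (lab u v = GridLabel.L ↔ lab v u = GridLabel.R))
    (hc : ∀ u v, G.Adj u v → (lab u v = GridLabel.U ↔ lab v u = GridLabel.D))
    (hd : ∀ u, HasLab G lab u GridLabel.R → HasLab G lab u GridLabel.U →
      ∃ a b c, G.Adj u a ∧ lab u a = GridLabel.R ∧ G.Adj a b ∧ lab a b = GridLabel.U ∧
        G.Adj b c ∧ lab b c = GridLabel.L ∧ G.Adj c u ∧ lab c u = GridLabel.D)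
    (he : ∀ u v, G.Adj u v → lab u v = GridLabel.R →
      ((HasLab G lab u GridLabel.D ↔ HasLab G lab v GridLabel.D) ∧
       (HasLab G lab u GridLabel.U ↔ HasLab G lab v GridLabel.U)))
    (hf : ∀ u v, G.Adj u v → lab u v = GridLabel.U →
      ((HasLab G lab u GridLabel.L ↔ HasLab G lab v GridLabel.L) ∧
       (HasLab G lab u GridLabel.R ↔ HasLab G lab v GridLabel.R)))
    (hnoD : ∃ u, ¬ HasLab G lab u GridLabel.D)
    (hnoL : ∃ u, ¬ HasLab G lab u GridLabel.L) :
    ∃ (w h : ℕ) (φ : V ≃ Fin w × Fin h),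
      ∀ u v, G.Adj u v ↔ GridAdj (φ u) (φ v) := by
  exact GridSetup.main ⟨G, lab, ha, hb, hc, hd, he, hf, hconn, hnoD, hnoL⟩
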